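/- The limit z = lim_{n→∞} ln f(n) / ((3/2)(3^n+1)) exists, where f(n) is the number of acyclic orientations of SG_2(n), and for every positive integer m it satisfies (2/3^(m+1))·ln d(m) ≤ z ≤ (2/3^(m+1))·ln f(m). -/

import Mathlib

/-- One step of the recursion of Lemma 1 of the paper for the numbers of classes
of acyclic orientations on the two-dimensional Sierpinski gasket `SG_2(n)`:
given the quadruple `(a, b, c, d)` at stage `n`, produce the quadruple at
stage `n+1`. -/
def sg2Step : ℕ × ℕ × ℕ × ℕ → ℕ × ℕ × ℕ × ℕ := fun (a, b, c, d) =>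
  (5*a^3 + 8*a^2*b + 6*a^2*c + 3*a*b^2 + 4*a*b*c + a*c^2,
   12*a^3 + 35*a^2*b + 24*a^2*c + 30*a*b^2 + 34*a*b*c + 4*a*c^2 + 8*b^3 + 12*b^2*c + 3*b*c^2,
   6*a^3 + 26*a^2*b + 39*a^2*c + 9*a^2*d + 30*a*b^2 + 76*a*b*c + 12*a*b*d + 40*a*c^2
     + 6*a*c*d + 10*b^3 + 33*b^2*c + 4*b^2*d + 30*b*c^2 + 4*b*c*d + 7*c^3 + c^2*d,
   24*a^3 + 126*a^2*b + 180*a^2*c + 54*a^2*d + 198*a*b^2 + 540*a*b*c + 144*a*b*d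
     + 360*a*c^2 + 180*a*c*d + 18*a*d^2 + 92*b^3 + 354*b^2*c + 84*b^2*d + 438*b*c^2
     + 192*b*c*d + 18*b*d^2 + 172*c^3 + 102*c^2*d + 18*c*d^2 + d^3)

/-- The quadruple `(a_2(n), b_2(n), c_2(n), d_2(n))` with initial values
`(1, 0, 0, 0)` at stage `0`. -/
def sg2Seq (n : ℕ) : ℕ × ℕ × ℕ × ℕ := sg2Step^[n] (1, 0, 0, 0)

def a2 (n : ℕ) : ℕ := (sg2Seq n).1
def b2 (n : ℕ) : ℕ := (sg2Seq n).2.1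
def c2 (n : ℕ) : ℕ := (sg2Seq n).2.2.1
def d2 (n : ℕ) : ℕ := (sg2Seq n).2.2.2

/-- The number of acyclic orientations of `SG_2(n)`. -/
def f2 (n : ℕ) : ℕ := 6 * a2 n + 6 * b2 n + 6 * c2 n + d2 n

lemma sg2Seq_succ (n : ℕ) : sg2Seq (n+1) = sg2Step (sg2Seq n) :=
  Function.iterate_succ_apply' _ _ _

lemma f2_succ_le (n : ℕ) : f2 (n+1) ≤ f2 n ^ 3 := by
  unfold f2 a2 b2 c2 d2
  rw [sg2Seq_succ]
  obtain ⟨a, b, c, d⟩ := sg2Seq n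
  simp only [sg2Step]
  refine Nat.le.intro (k := 54*a^3 + 108*a^2*b + 54*a^2*c + 72*a*b^2 + 72*a*b*c + 18*a*c^2
    + 16*b^3 + 24*b^2*c + 12*b*c^2 + 2*c^3) ?_
  ring

lemma d2_cube_le (n : ℕ) : d2 n ^ 3 ≤ d2 (n+1) := by
  unfold d2
  rw [sg2Seq_succ]
  obtain ⟨a, b, c, d⟩ := sg2Seq n
  simp only [sg2Step]
  refine Nat.le.intro (k := 24*a^3 + 126*a^2*b + 180*a^2*c + 54*a^2*d + 198*a*b^2 + 540*a*b*c
    + 144*a*b*d + 360*a*c^2 + 180*a*c*d + 18*a*d^2 + 92*b^3 + 354*b^2*c + 84*b^2*d + 438*b*c^2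
    + 192*b*c*d + 18*b*d^2 + 172*c^3 + 102*c^2*d + 18*c*d^2) ?_
  ring

lemma one_le_a2 (n : ℕ) : 1 ≤ a2 n := by
  induction n with
  | zero => simp [a2, sg2Seq]
  | succ n ih =>
    unfold a2 at *
    rw [sg2Seq_succ]
    revert ih
    obtain ⟨a, b, c, d⟩ := sg2Seq n
    simp only
    intro ih
    simp only [sg2Step]
    have h3 : 1 ≤ a ^ 3 := Nat.one_le_pow _ _ (by omega)
    refine le_trans h3 (Nat.le.intro
      (k := 4*a^3 + 8*a^2*b + 6*a^2*c + 3*a*b^2 + 4*a*b*c + a*c^2) ?_)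
    ring

lemma one_le_f2 (n : ℕ) : 1 ≤ f2 n := by
  have := one_le_a2 n
  unfold f2; omega

lemma d2_le_f2 (n : ℕ) : d2 n ≤ f2 n := by unfold f2; omega

lemma one_le_d2_succ (n : ℕ) : 1 ≤ d2 (n+1) := by
  have ha := one_le_a2 n
  unfold d2 a2 at *
  rw [sg2Seq_succ]
  revert ha
  obtain ⟨a, b, c, d⟩ := sg2Seq n
  simp only
  intro ha
  simp only [sg2Step]
  have h3 : 1 ≤ a ^ 3 := Nat.one_le_pow _ _ (by omega)
  refine le_trans h3 (Nat.le.intro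
    (k := 23*a^3 + 126*a^2*b + 180*a^2*c + 54*a^2*d + 198*a*b^2 + 540*a*b*c + 144*a*b*d
      + 360*a*c^2 + 180*a*c*d + 18*a*d^2 + 92*b^3 + 354*b^2*c + 84*b^2*d + 438*b*c^2
      + 192*b*c*d + 18*b*d^2 + 172*c^3 + 102*c^2*d + 18*c*d^2 + d^3) ?_)
  ring

lemma d2_pow_le (m k : ℕ) : d2 m ^ 3 ^ k ≤ d2 (m + k) := by
  induction k with
  | zero => simp
  | succ k ih =>
    calc d2 m ^ 3 ^ (k+1) = (d2 m ^ 3 ^ k) ^ 3 := by rw [← pow_mul, pow_succ]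
    _ ≤ d2 (m + k) ^ 3 := Nat.pow_le_pow_left ih 3
    _ ≤ d2 (m + k + 1) := d2_cube_le _

/-- the limit `z = lim_n ln f(n) / ((3/2)(3^n + 1))` exists, and for
every positive integer `m`,
`(2/3^(m+1))·ln d(m) ≤ z ≤ (2/3^(m+1))·ln f(m)`. -/
theorem sg2_growth_constant :
    ∃ z : ℝ, Filter.Tendsto
        (fun n : ℕ => Real.log (f2 n) / ((3 / 2) * (3 ^ n + 1))) Filter.atTop (nhds z) ∧
      ∀ m : ℕ, 1 ≤ m →
        (2 / 3 ^ (m + 1)) * Real.log (d2 m) ≤ z ∧ z ≤ (2 / 3 ^ (m + 1)) * Real.log (f2 m) := by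
  set L : ℕ → ℝ := fun n => Real.log (f2 n) / 3 ^ n with hLdef
  have hf1 : ∀ n, (1 : ℝ) ≤ (f2 n : ℝ) := fun n => by exact_mod_cast one_le_f2 n
  have hlog0 : ∀ n, 0 ≤ Real.log (f2 n) := fun n => Real.log_nonneg (hf1 n)
  have hanti : Antitone L := by
    apply antitone_nat_of_succ_le
    intro n
    have h1 : Real.log (f2 (n+1)) ≤ 3 * Real.log (f2 n) := by
      have h2 : Real.log (f2 (n+1)) ≤ Real.log ((f2 n : ℝ) ^ 3) := by
        apply Real.log_le_log (by linarith [hf1 (n+1)])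
        have := f2_succ_le n
        push_cast
        exact_mod_cast this
      rwa [Real.log_pow, Nat.cast_ofNat] at h2
    show Real.log (f2 (n+1)) / 3 ^ (n+1) ≤ Real.log (f2 n) / 3 ^ n
    rw [div_le_div_iff₀ (by positivity) (by positivity)]
    calc Real.log (f2 (n+1)) * 3 ^ n ≤ (3 * Real.log (f2 n)) * 3 ^ n := by
          apply mul_le_mul_of_nonneg_right h1 (by positivity)
    _ = Real.log (f2 n) * 3 ^ (n+1) := by ring
  have hbdd : BddBelow (Set.range L) := by
    refine ⟨0, ?_⟩
    rintro x ⟨n, rfl⟩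
    have := hlog0 n
    positivity
  set z0 : ℝ := ⨅ n, L n with hz0
  have htend : Filter.Tendsto L Filter.atTop (nhds z0) := tendsto_atTop_ciInf hanti hbdd
  -- lower bound
  have hlow : ∀ m : ℕ, 1 ≤ m → Real.log (d2 m) / 3 ^ m ≤ z0 := by
    intro m hm
    obtain ⟨j, rfl⟩ : ∃ j, m = j + 1 := ⟨m - 1, by omega⟩
    apply ge_of_tendsto htend
    filter_upwards [Filter.eventually_ge_atTop (j+1)] with n hn
    obtain ⟨k, rfl⟩ := Nat.exists_eq_add_of_le hn
    have hd1 : (1 : ℝ) ≤ (d2 (j+1) : ℝ) := by exact_mod_cast one_le_d2_succ j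
    have h1 : (d2 (j+1) : ℝ) ^ 3 ^ k ≤ (f2 (j+1+k) : ℝ) := by
      exact_mod_cast le_trans (d2_pow_le (j+1) k) (d2_le_f2 _)
    have h2 : (3 ^ k : ℝ) * Real.log (d2 (j+1)) ≤ Real.log (f2 (j+1+k)) := by
      have := Real.log_le_log (by positivity) h1
      rwa [Real.log_pow, Nat.cast_pow, Nat.cast_ofNat] at this
    show Real.log (d2 (j+1)) / 3 ^ (j+1) ≤ Real.log (f2 (j+1+k)) / 3 ^ (j+1+k)
    rw [div_le_div_iff₀ (by positivity) (by positivity)]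
    calc Real.log (d2 (j+1)) * 3 ^ (j+1+k)
        = ((3:ℝ) ^ k * Real.log (d2 (j+1))) * 3 ^ (j+1) := by rw [pow_add]; ring
    _ ≤ Real.log (f2 (j+1+k)) * 3 ^ (j+1) := by
        apply mul_le_mul_of_nonneg_right h2 (by positivity)
  have hup : ∀ m : ℕ, z0 ≤ L m := fun m => ciInf_le hbdd m
  -- the scaling limit
  have h3inv : Filter.Tendsto (fun n : ℕ => ((3:ℝ) ^ n)⁻¹) Filter.atTop (nhds 0) :=
    tendsto_inv_atTop_zero.comp (tendsto_pow_atTop_atTop_of_one_lt (by norm_num : (1:ℝ) < 3))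
  have hc : Filter.Tendsto (fun n : ℕ => (3:ℝ) ^ n / ((3 / 2) * (3 ^ n + 1)))
      Filter.atTop (nhds (2/3)) := by
    have h2 := ((h3inv.const_add 1).const_mul (3/2 : ℝ)).inv₀ (by norm_num)
    convert h2 using 2 with n
    · have h3 : (3:ℝ) ^ n ≠ 0 := by positivity
      field_simp
    · norm_num
  refine ⟨z0 * (2/3), ?_, ?_⟩
  · have := htend.mul hc
    convert this using 2 with n
    have h3 : (3:ℝ) ^ n ≠ 0 := by positivity
    have h4 : (3:ℝ) ^ n + 1 ≠ 0 := by positivity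
    simp only [hLdef]
    field_simp
  · intro m hm
    constructor
    · have h := hlow m hm
      have : (2 / (3:ℝ) ^ (m+1)) * Real.log (d2 m)
          = (Real.log (d2 m) / 3 ^ m) * (2/3) := by
        rw [pow_succ]
        have : (3:ℝ) ^ m ≠ 0 := by positivity
        field_simp
      rw [this]
      apply mul_le_mul_of_nonneg_right h (by norm_num)
    · have h := hup m
      have heq : (2 / (3:ℝ) ^ (m+1)) * Real.log (f2 m)
          = (Real.log (f2 m) / 3 ^ m) * (2/3) := by
        rw [pow_succ]
        have : (3:ℝ) ^ m ≠ 0 := by positivity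
        field_simp
      rw [heq]
      apply mul_le_mul_of_nonneg_right h (by norm_num)
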